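/- With B_n and D_n(λ) as above, D_n satisfies D_{n+1}(λ) = 2λ D_n(λ) + 2n D_{n-1}(λ) for all integers n > 0, and consequently i^{-n} D_n(ix) equals the n-th Hermite polynomial H_n(x) (physicists' convention). -/

import Mathlib

/-- Physicists' Hermite polynomials: `H 0 = 1`, `H 1 x = 2x`,
`H (n+2) x = 2x H (n+1) x - 2(n+1) H n x`. -/
noncomputable def hermiteP : ℕ → ℝ → ℝ
  | 0 => fun _ => 1
  | 1 => fun x => 2 * x
  | (n + 2) => fun x => 2 * x * hermiteP (n + 1) x - 2 * ((n : ℝ) + 1) * hermiteP n x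

/-- The tridiagonal antisymmetric matrix with superdiagonal entries `√(2k)` (1-based). -/
noncomputable def Bmat (n : ℕ) : Matrix (Fin n) (Fin n) ℂ :=
  Matrix.of fun j k =>
    if (k : ℕ) = (j : ℕ) + 1 then (Real.sqrt (2 * ((j : ℕ) + 1)) : ℂ)
    else if (j : ℕ) = (k : ℕ) + 1 then -(Real.sqrt (2 * ((k : ℕ) + 1)) : ℂ)
    else 0

/-- `D_n(z) = det (B_n + 2 z I)` (over ℂ so that it can be evaluated at `i x`). -/
noncomputable def Dpoly (n : ℕ) (z : ℂ) : ℂ :=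
  (Bmat n + (2 * z) • (1 : Matrix (Fin n) (Fin n) ℂ)).det

/-- the recurrence `D_{n+1} = 2λ D_n + 2n D_{n-1}` and the identity
`i^{-n} D_n(ix) = H_n(x)`. -/
lemma Mentry (n : ℕ) (z : ℂ) (j k : Fin n) :
    (Bmat n + (2*z) • (1 : Matrix (Fin n) (Fin n) ℂ)) j k =
    (if (k:ℕ) = (j:ℕ)+1 then (Real.sqrt (2*((j:ℕ)+1)) : ℂ)
     else if (j:ℕ) = (k:ℕ)+1 then -(Real.sqrt (2*((k:ℕ)+1)) : ℂ) else 0)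
    + if j = k then 2*z else 0 := by
  simp only [Bmat, Matrix.add_apply, Matrix.smul_apply, Matrix.one_apply, Matrix.of_apply,
    smul_eq_mul, mul_ite, mul_one, mul_zero]

lemma Dpoly_rec (n : ℕ) (z : ℂ) :
    Dpoly (n+2) z = 2*z * Dpoly (n+1) z + 2*((n:ℂ)+1) * Dpoly n z := by
  set A := Bmat (n+2) + (2*z) • (1 : Matrix (Fin (n+2)) (Fin (n+2)) ℂ) with hA
  have hAe : ∀ j k : Fin (n+2), A j k =
      (if (k:ℕ) = (j:ℕ)+1 then (Real.sqrt (2*((j:ℕ)+1)) : ℂ)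
       else if (j:ℕ) = (k:ℕ)+1 then -(Real.sqrt (2*((k:ℕ)+1)) : ℂ) else 0)
      + if j = k then 2*z else 0 := fun j k => Mentry (n+2) z j k
  have h1 : Dpoly (n+2) z = A.det := rfl
  rw [h1, Matrix.det_succ_row A (Fin.last (n+1))]
  set a : Fin (n+2) := Fin.castSucc (Fin.last n) with ha
  set b : Fin (n+2) := Fin.last (n+1) with hb
  have hav : (a : ℕ) = n := rfl
  have hbv : (b : ℕ) = n + 1 := rfl
  have hab : a ≠ b := by simp [Fin.ext_iff, hav, hbv]
  have hzero : ∀ x ∈ Finset.univ, x ∉ ({a, b} : Finset (Fin (n+2))) →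
      (-1 : ℂ) ^ ((b:ℕ) + (x:ℕ)) * A b x * (A.submatrix b.succAbove x.succAbove).det = 0 := by
    intro x _ hx
    simp only [Finset.mem_insert, Finset.mem_singleton, not_or] at hx
    have hxa : (x:ℕ) ≠ n := fun h => hx.1 (Fin.ext (by simp [hav, h]))
    have hxb : (x:ℕ) ≠ n+1 := fun h => hx.2 (Fin.ext (by simp [hbv, h]))
    have : A b x = 0 := by
      rw [hAe, if_neg (by rw [hbv]; omega), if_neg (by rw [hbv]; omega),
        if_neg (fun h => hxb (by rw [← h, hbv])), add_zero]
    simp [this]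
  rw [← Finset.sum_subset (Finset.subset_univ {a, b}) hzero, Finset.sum_pair hab]
  set s : ℂ := (Real.sqrt (2 * ((n:ℕ) + 1)) : ℂ) with hs0
  -- term b
  have hsub1 : A.submatrix b.succAbove b.succAbove =
      Bmat (n+1) + (2*z) • (1 : Matrix (Fin (n+1)) (Fin (n+1)) ℂ) := by
    ext j k
    rw [hb, Matrix.submatrix_apply, Fin.succAbove_last, hAe, Mentry]
    simp [Fin.ext_iff]
  have hbb : A b b = 2*z := by
    rw [hAe, if_neg (by omega), if_neg (by omega), if_pos rfl, zero_add]
  have hsignb : (-1 : ℂ) ^ ((b:ℕ) + (b:ℕ)) = 1 := by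
    rw [hbv, show (n+1) + (n+1) = 2*(n+1) by ring, pow_mul]; simp
  -- term a
  have hba : A b a = -s := by
    rw [hAe, if_neg (by rw [hav, hbv]; omega), if_pos (by rw [hav, hbv]),
      if_neg hab.symm, add_zero, hs0, hav]
  have hsigna : (-1 : ℂ) ^ ((b:ℕ) + (a:ℕ)) = -1 := by
    rw [hbv, hav, show (n+1) + n = 2*n+1 by ring, pow_succ, pow_mul]; simp
  -- the minor for term a
  set N := A.submatrix b.succAbove a.succAbove with hN
  have hcol : a.succAbove (Fin.last n) = b := by
    rw [ha, Fin.succAbove_of_le_castSucc _ _ (le_refl _), Fin.succ_last]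
  have hNdet : N.det = s * Dpoly n z := by
    rw [Matrix.det_succ_column N (Fin.last n)]
    rw [Finset.sum_eq_single (Fin.last n)]
    · have hNll : N (Fin.last n) (Fin.last n) = s := by
        rw [hN, Matrix.submatrix_apply, hcol, hb, Fin.succAbove_last, hAe,
          if_pos (by simp), if_neg (by simp [Fin.ext_iff]), add_zero, hs0]
        norm_num
      have hsub2 : N.submatrix (Fin.last n).succAbove (Fin.last n).succAbove =
          Bmat n + (2*z) • (1 : Matrix (Fin n) (Fin n) ℂ) := by
        ext j k
        have hcol2 : a.succAbove (Fin.castSucc k) = Fin.castSucc (Fin.castSucc k) := by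
          rw [ha]
          exact Fin.succAbove_of_castSucc_lt _ _ (by simp [Fin.lt_iff_val_lt_val, k.isLt])
        rw [Matrix.submatrix_apply, Fin.succAbove_last, hN, Matrix.submatrix_apply,
          Fin.succAbove_last, hcol2, hAe, Mentry]
        simp [Fin.ext_iff]
      rw [hNll, hsub2]
      have hsgn : (-1:ℂ) ^ ((Fin.last n : ℕ) + (Fin.last n : ℕ)) = 1 := by
        rw [show ((Fin.last n : ℕ) + (Fin.last n : ℕ)) = 2*n by simp [Fin.val_last]; ring, pow_mul]
        simp
      rw [hsgn, Dpoly]; ring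
    · intro r _ hr
      have hrv : (r : ℕ) < n := lt_of_le_of_ne (Nat.lt_succ_iff.mp r.isLt)
        (fun h => hr (Fin.ext (by simp [h])))
      have : N r (Fin.last n) = 0 := by
        rw [hN, Matrix.submatrix_apply, hcol, hb, Fin.succAbove_last, hAe,
          if_neg (by rw [← hb, hbv]; simp; omega),
          if_neg (by rw [← hb, hbv]; simp; omega),
          if_neg (by rw [← hb]; simp [Fin.ext_iff, hbv]; omega), add_zero]
      simp [this]
    · intro h; exact absurd (Finset.mem_univ _) h
  rw [hsub1, hbb, hsignb, hba, hsigna, hNdet]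
  have hss : s * s = 2*((n:ℂ)+1) := by
    have h := Real.mul_self_sqrt (by positivity : (0:ℝ) ≤ 2*((n:ℝ)+1))
    rw [hs0, ← Complex.ofReal_mul, h]
    push_cast; ring
  have hD1 : (Bmat (n+1) + (2*z) • (1 : Matrix (Fin (n+1)) (Fin (n+1)) ℂ)).det
      = Dpoly (n+1) z := rfl
  rw [hD1]
  calc (-1:ℂ) * -s * (s * Dpoly n z) + 1 * (2*z) * Dpoly (n+1) z
      = (s * s) * Dpoly n z + 2*z*Dpoly (n+1) z := by ring
    _ = 2*z * Dpoly (n+1) z + 2*((n:ℂ)+1) * Dpoly n z := by rw [hss]; ring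

lemma Dpoly_zero (z : ℂ) : Dpoly 0 z = 1 := by
  rw [Dpoly, Matrix.det_fin_zero]

lemma Dpoly_one (z : ℂ) : Dpoly 1 z = 2 * z := by
  rw [Dpoly, Matrix.det_fin_one, Mentry]
  norm_num

lemma Ineg2 : Complex.I ^ (-2 : ℤ) = -1 := by
  rw [zpow_neg, show ((2:ℤ)) = ((2:ℕ):ℤ) from rfl, zpow_natCast, Complex.I_sq]
  norm_num


lemma part2 (n : ℕ) (x : ℝ) :
    Complex.I ^ (-(n : ℤ)) * Dpoly n (Complex.I * (x : ℂ)) = (hermiteP n x : ℂ) := by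
  induction n using Nat.strong_induction_on with
  | _ n ih =>
    match n with
    | 0 => simp [Dpoly_zero, hermiteP]
    | 1 =>
      rw [Dpoly_one, hermiteP]
      push_cast
      rw [show (-(1:ℤ)) = -1 from rfl, zpow_neg_one]
      field_simp [Complex.I_ne_zero]
    | (n+2) =>
      have e1 : Complex.I ^ (-((n:ℤ)+1)) * Dpoly (n+1) (Complex.I * x) = (hermiteP (n+1) x : ℂ) := by
        have := ih (n+1) (by omega)
        push_cast at this ⊢
        exact this
      have e0 : Complex.I ^ (-(n:ℤ)) * Dpoly n (Complex.I * x) = (hermiteP n x : ℂ) :=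
        ih n (by omega)
      have hA : Complex.I ^ (-((n:ℤ)+2)) * Complex.I = Complex.I ^ (-((n:ℤ)+1)) := by
        have h := zpow_add_one₀ Complex.I_ne_zero (-((n:ℤ)+2))
        rw [show (-((n:ℤ)+2) + 1) = -((n:ℤ)+1) by ring] at h
        rw [← h]
      have hB : Complex.I ^ (-((n:ℤ)+2)) = - Complex.I ^ (-(n:ℤ)) := by
        rw [show (-((n:ℤ)+2)) = -(n:ℤ) + (-2) by ring, zpow_add₀ Complex.I_ne_zero, Ineg2]
        ring
      have hH : (hermiteP (n+2) x : ℂ)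
          = 2*(x:ℂ)*(hermiteP (n+1) x : ℂ) - 2*((n:ℂ)+1)*(hermiteP n x : ℂ) := by
        rw [show hermiteP (n+2) x = 2*x*hermiteP (n+1) x - 2*((n:ℝ)+1)*hermiteP n x from rfl]
        push_cast; ring
      have hcast : (-(((n:ℕ)+2 : ℕ) : ℤ)) = -((n:ℤ)+2) := by push_cast; ring
      rw [hcast, Dpoly_rec, hH, ← e1, ← e0]
      calc Complex.I ^ (-((n:ℤ)+2)) *
            (2*(Complex.I*(x:ℂ)) * Dpoly (n+1) (Complex.I*x) + 2*((n:ℂ)+1) * Dpoly n (Complex.I*x))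
          = 2*(x:ℂ)*((Complex.I ^ (-((n:ℤ)+2)) * Complex.I) * Dpoly (n+1) (Complex.I*x))
            + 2*((n:ℂ)+1) * (Complex.I ^ (-((n:ℤ)+2)) * Dpoly n (Complex.I*x)) := by ring
        _ = 2*(x:ℂ)*(Complex.I ^ (-((n:ℤ)+1)) * Dpoly (n+1) (Complex.I*x))
            - 2*((n:ℂ)+1)*(Complex.I ^ (-(n:ℤ)) * Dpoly n (Complex.I*x)) := by
            rw [hA, hB]; ring


theorem stmt1 :
    (∀ n : ℕ, 0 < n → ∀ z : ℂ,
      Dpoly (n + 1) z = 2 * z * Dpoly n z + 2 * (n : ℂ) * Dpoly (n - 1) z) ∧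
    (∀ (n : ℕ) (x : ℝ),
      Complex.I ^ (-(n : ℤ)) * Dpoly n (Complex.I * (x : ℂ)) = (hermiteP n x : ℂ)) := by
  constructor
  · intro n hn z
    match n, hn with
    | (m+1), _ =>
      simp only [Nat.add_sub_cancel]
      push_cast
      exact Dpoly_rec m z
  · exact part2
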